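/- arXiv:1210.6712 — 2 statements merged into one kernel-verified Lean document; each statement's English description precedes it below -/
import Mathlib

section
/- A nonnegative square matrix A over the reals is nilpotent if and only if the directed graph with an edge from i to j whenever A(i,j) > 0 contains no directed cycle. -/
theorem nonneg_nilpotent_iff_no_cycle {n : ℕ} (A : Matrix (Fin n) (Fin n) ℝ)
    (hA : ∀ i j, 0 ≤ A i j) :
    (∃ k : ℕ, 1 ≤ k ∧ A ^ k = 0) ↔
      ¬ ∃ (k : ℕ) (c : ℕ → Fin n), 1 ≤ k ∧ c 0 = c k ∧
        ∀ i < k, 0 < A (c i) (c (i + 1)) := by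
  have hpow : ∀ k i j, 0 ≤ (A ^ k) i j := by
    intro k
    induction k with
    | zero =>
      intro i j
      by_cases h : i = j <;> simp [Matrix.one_apply, h]
    | succ k ih =>
      intro i j
      rw [pow_succ, Matrix.mul_apply]
      exact Finset.sum_nonneg fun m _ => mul_nonneg (ih i m) (hA m j)
  have path_pos : ∀ k (c : ℕ → Fin n), (∀ t < k, 0 < A (c t) (c (t + 1))) →
      0 < (A ^ k) (c 0) (c k) := by
    intro k
    induction k with
    | zero => intro c _; simp [Matrix.one_apply]
    | succ k ih =>
      intro c hc
      rw [pow_succ, Matrix.mul_apply]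
      have h1 : 0 < (A ^ k) (c 0) (c k) := ih c fun t ht => hc t (Nat.lt_succ_of_lt ht)
      have h2 : 0 < A (c k) (c (k + 1)) := hc k (Nat.lt_succ_self k)
      exact Finset.sum_pos' (fun m _ => mul_nonneg (hpow k _ m) (hA m _))
        ⟨c k, Finset.mem_univ _, mul_pos h1 h2⟩
  have pos_path : ∀ k i j, 0 < (A ^ k) i j →
      ∃ c : ℕ → Fin n, c 0 = i ∧ c k = j ∧ ∀ t < k, 0 < A (c t) (c (t + 1)) := by
    intro k
    induction k with
    | zero =>
      intro i j h
      by_cases hij : i = j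
      · exact ⟨fun _ => i, rfl, hij ▸ rfl, fun t ht => absurd ht (Nat.not_lt_zero t)⟩
      · simp [Matrix.one_apply, hij] at h
    | succ k ih =>
      intro i j h
      rw [pow_succ, Matrix.mul_apply] at h
      obtain ⟨m, _, hm⟩ := Finset.exists_lt_of_sum_lt
        (f := fun _ : Fin n => (0 : ℝ)) (by simpa using h)
      have h1 : 0 < (A ^ k) i m := by
        rcases (hpow k i m).lt_or_eq with h' | h'
        · exact h'
        · rw [← h'] at hm; simp at hm
      have h2 : 0 < A m j := by
        rcases (hA m j).lt_or_eq with h' | h'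
        · exact h'
        · rw [← h'] at hm; simp at hm
      obtain ⟨c, hc0, hck, hcp⟩ := ih i m h1
      refine ⟨fun t => if t ≤ k then c t else j, by simpa using hc0, by simp, ?_⟩
      intro t ht
      rcases Nat.lt_or_ge t k with h' | h'
      · have ht1 : t ≤ k := le_of_lt h'
        have ht2 : t + 1 ≤ k := h'
        simpa [ht1, ht2] using hcp t h'
      · have htk : t = k := by omega
        subst htk
        simpa [hck] using h2
  constructor
  · rintro ⟨K, hK, hK0⟩ ⟨k, c, hk, hc0, hcyc⟩
    have hcc : 0 < (A ^ k) (c 0) (c 0) := by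
      have := path_pos k c hcyc
      rwa [← hc0] at this
    have hdiag : ∀ m, 0 < (A ^ (m * k)) (c 0) (c 0) := by
      intro m
      induction m with
      | zero => simp [Matrix.one_apply]
      | succ m ih =>
        have he : A ^ ((m + 1) * k) = A ^ (m * k) * A ^ k := by
          rw [← pow_add, Nat.succ_mul]
        rw [he, Matrix.mul_apply]
        exact Finset.sum_pos' (fun t _ => mul_nonneg (hpow _ _ t) (hpow _ t _))
          ⟨c 0, Finset.mem_univ _, mul_pos ih hcc⟩
    have hz : A ^ (K * k) = 0 := by
      rw [pow_mul, hK0, zero_pow (by omega : k ≠ 0)]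
    have := hdiag K
    rw [hz] at this
    simp at this
  · intro hnc
    refine ⟨n + 1, by omega, ?_⟩
    ext i j
    simp only [Matrix.zero_apply]
    by_contra hne
    have hpos : 0 < (A ^ (n + 1)) i j := (hpow _ i j).lt_of_ne (Ne.symm hne)
    obtain ⟨c, hc0, hck, hpath⟩ := pos_path (n + 1) i j hpos
    have hni : ¬ Function.Injective (fun t : Fin (n + 2) => c t) := by
      intro hinj
      have := Fintype.card_le_of_injective _ hinj
      simp [Fintype.card_fin] at this
    obtain ⟨a, b, hcab, hab⟩ := Function.not_injective_iff.mp hni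
    apply hnc
    obtain ⟨p, q, hpq, hcpq⟩ : ∃ p q : Fin (n + 2), p < q ∧ c p = c q := by
      rcases lt_or_gt_of_ne hab with h | h
      · exact ⟨a, b, h, hcab⟩
      · exact ⟨b, a, h, hcab.symm⟩
    have hpq' : (p : ℕ) < (q : ℕ) := hpq
    refine ⟨(q : ℕ) - (p : ℕ), fun t => c ((p : ℕ) + t), by omega, ?_, ?_⟩
    · have he : (p : ℕ) + ((q : ℕ) - (p : ℕ)) = (q : ℕ) := by omega
      simp only [Nat.add_zero, he]
      exact hcpq
    · intro t ht
      have hq2 := q.2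
      have h1 : (p : ℕ) + t < n + 1 := by omega
      have := hpath ((p : ℕ) + t) h1
      simpa [Nat.add_assoc] using this
end

section
/- Let A be a nonnegative n × n matrix. Then A is nilpotent if and only if A can be reduced to the zero matrix by repeatedly applying the following operation: if the i-th row of the current matrix is entirely zero, replace the i-th column by zeros; and if the i-th column is entirely zero, replace the i-th row by zeros. -/
/-- One step of the reduction process: if a row is zero, zero out the column with the
same index; if a column is zero, zero out the row with the same index. -/
def redStep {n : ℕ} (M M' : Matrix (Fin n) (Fin n) ℝ) : Prop :=
  ∃ i : Fin n,
    ((∀ j, M i j = 0) ∧ M' = M.updateCol i (fun _ => 0)) ∨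
    ((∀ j, M j i = 0) ∧ M' = M.updateRow i (fun _ => 0))

namespace RedAux

open Matrix Finset

variable {n : ℕ}

lemma pow_entry_nonneg (M : Matrix (Fin n) (Fin n) ℝ) (hM : ∀ i j, 0 ≤ M i j) :
    ∀ k i j, 0 ≤ (M ^ k) i j := by
  intro k
  induction k with
  | zero => intro i j; simp [Matrix.one_apply]; positivity
  | succ k ih =>
      intro i j
      rw [pow_succ, Matrix.mul_apply]
      exact Finset.sum_nonneg fun l _ => mul_nonneg (ih i l) (hM l j)

lemma le_pow_add (M : Matrix (Fin n) (Fin n) ℝ) (hM : ∀ i j, 0 ≤ M i j)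
    (a b : ℕ) (i j k : Fin n) : (M ^ a) i j * (M ^ b) j k ≤ (M ^ (a + b)) i k := by
  rw [pow_add, Matrix.mul_apply]
  exact Finset.single_le_sum
    (fun l _ => mul_nonneg (pow_entry_nonneg M hM a i l) (pow_entry_nonneg M hM b l k))
    (Finset.mem_univ j)

lemma diag_pow_le (M : Matrix (Fin n) (Fin n) ℝ) (hM : ∀ i j, 0 ≤ M i j)
    (m : ℕ) (x : Fin n) : ∀ t : ℕ, ((M ^ m) x x) ^ t ≤ (M ^ (m * t)) x x := by
  intro t
  induction t with
  | zero => simp [Matrix.one_apply]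
  | succ t ih =>
      have h1 : ((M ^ m) x x) ^ (t + 1) = ((M ^ m) x x) ^ t * (M ^ m) x x := pow_succ _ _
      rw [h1]
      calc ((M ^ m) x x) ^ t * (M ^ m) x x
          ≤ (M ^ (m * t)) x x * (M ^ m) x x := by
            apply mul_le_mul_of_nonneg_right ih (pow_entry_nonneg M hM m x x)
        _ ≤ (M ^ (m * t + m)) x x := le_pow_add M hM (m * t) m x x x

lemma not_nilpotent_of_diag_pos (M : Matrix (Fin n) (Fin n) ℝ) (hM : ∀ i j, 0 ≤ M i j)
    (x : Fin n) (m : ℕ) (hm : 1 ≤ m) (hpos : 0 < (M ^ m) x x) (k : ℕ) (hk1 : 1 ≤ k)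
    (hk : M ^ k = 0) : False := by
  have h0 : M ^ (m * k) = 0 := pow_eq_zero_of_le (Nat.le_mul_of_pos_left k hm) hk
  have h1 := diag_pow_le M hM m x k
  rw [h0] at h1
  simp at h1
  exact absurd h1 (not_le.mpr (pow_pos hpos k))

/-- A "dead" index: its whole row and whole column are zero. -/
def Dead (M : Matrix (Fin n) (Fin n) ℝ) (i : Fin n) : Prop :=
  (∀ j, M i j = 0) ∧ (∀ j, M j i = 0)

lemma exists_sink (M : Matrix (Fin n) (Fin n) ℝ) (hM : ∀ i j, 0 ≤ M i j)
    (hnil : ∃ k, 1 ≤ k ∧ M ^ k = 0) (P : Fin n → Prop) (hP : ∃ i, P i) :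
    ∃ i, P i ∧ ∀ j, P j → M i j = 0 := by
  by_contra hcon
  push_neg at hcon
  obtain ⟨i0, hi0⟩ := hP
  have hstep : ∀ i : {i // P i}, ∃ j : {i // P i}, 0 < M i.1 j.1 := by
    intro i
    obtain ⟨j, hj, hne⟩ := hcon i.1 i.2
    exact ⟨⟨j, hj⟩, lt_of_le_of_ne (hM i.1 j) (Ne.symm hne)⟩
  choose f hf using hstep
  set g : ℕ → {i // P i} := fun m => f^[m] ⟨i0, hi0⟩ with hg
  have hpath : ∀ a m : ℕ, 0 < (M ^ m) (g a).1 (g (a + m)).1 := by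
    intro a m
    induction m with
    | zero => simp [Matrix.one_apply]
    | succ m ih =>
        have hgs : g (a + m + 1) = f (g (a + m)) := by
          simp [hg, Function.iterate_succ_apply']
        have h2 : (M ^ m) (g a).1 (g (a + m)).1 * M (g (a + m)).1 (g (a + m + 1)).1
            ≤ (M ^ (m + 1)) (g a).1 (g (a + m + 1)).1 := le_pow_add M hM m 1 _ _ _ |>.trans_eq' (by rw [pow_one])
        have h3 : 0 < M (g (a + m)).1 (g (a + m + 1)).1 := by rw [hgs]; exact hf _
        have := mul_pos ih h3
        have h4 : a + (m + 1) = a + m + 1 := by ring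
        rw [h4]
        exact lt_of_lt_of_le this h2
  obtain ⟨a, b, hne, hab⟩ := Finite.exists_ne_map_eq_of_infinite g
  obtain ⟨k, hk1, hk⟩ := hnil
  rcases lt_or_gt_of_ne hne with h | h
  · have := hpath a (b - a)
    rw [Nat.add_sub_cancel' h.le, ← hab] at this
    exact not_nilpotent_of_diag_pos M hM _ _ (Nat.one_le_iff_ne_zero.mpr
      (Nat.sub_ne_zero_of_lt h)) this k hk1 hk
  · have := hpath b (a - b)
    rw [Nat.add_sub_cancel' h.le, hab] at this
    exact not_nilpotent_of_diag_pos M hM _ _ (Nat.one_le_iff_ne_zero.mpr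
      (Nat.sub_ne_zero_of_lt h)) this k hk1 hk

lemma pow_le_pow_of_le (A B : Matrix (Fin n) (Fin n) ℝ) (hB : ∀ i j, 0 ≤ B i j)
    (hA : ∀ i j, 0 ≤ A i j) (hBA : ∀ i j, B i j ≤ A i j) :
    ∀ k i j, (B ^ k) i j ≤ (A ^ k) i j := by
  intro k
  induction k with
  | zero => intro i j; simp
  | succ k ih =>
      intro i j
      rw [pow_succ, pow_succ, Matrix.mul_apply, Matrix.mul_apply]
      refine Finset.sum_le_sum fun l _ => ?_
      exact mul_le_mul (ih i l) (hBA l j) (hB l j) (pow_entry_nonneg A hA k i l)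

lemma nilpotent_of_le (A B : Matrix (Fin n) (Fin n) ℝ) (hB : ∀ i j, 0 ≤ B i j)
    (hA : ∀ i j, 0 ≤ A i j) (hBA : ∀ i j, B i j ≤ A i j) (k : ℕ) (hk : A ^ k = 0) :
    B ^ k = 0 := by
  ext i j
  have h1 := pow_le_pow_of_le A B hB hA hBA k i j
  rw [hk] at h1
  simp at h1 ⊢
  exact le_antisymm h1 (pow_entry_nonneg B hB k i j)

lemma eq_zero_of_all_dead (M : Matrix (Fin n) (Fin n) ℝ) (h : ∀ i, Dead M i) : M = 0 := by
  ext i j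
  exact (h i).1 j

open Classical in
lemma forward_aux : ∀ N : ℕ, ∀ M : Matrix (Fin n) (Fin n) ℝ, (∀ i j, 0 ≤ M i j) →
    (∃ k, 1 ≤ k ∧ M ^ k = 0) →
    (Finset.univ.filter fun i => ¬ Dead M i).card ≤ N →
    Relation.ReflTransGen redStep M 0 := by
  intro N
  induction N with
  | zero =>
      intro M hM _ hcard
      have : M = 0 := by
        apply eq_zero_of_all_dead
        intro i
        by_contra hd
        have : i ∈ Finset.univ.filter fun i => ¬ Dead M i := by simp [hd]
        have := Finset.card_pos.mpr ⟨i, this⟩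
        omega
      rw [this]
  | succ N ih =>
      intro M hM hnil hcard
      by_cases hall : ∀ i, Dead M i
      · rw [eq_zero_of_all_dead M hall]
      · push_neg at hall
        obtain ⟨i, hi, hrow⟩ := exists_sink M hM hnil (fun i => ¬ Dead M i) hall
        -- row i of M is entirely zero
        have hrow' : ∀ j, M i j = 0 := by
          intro j
          by_cases hd : Dead M j
          · exact hd.2 i
          · exact hrow j hd
        set M' : Matrix (Fin n) (Fin n) ℝ := M.updateCol i (fun _ => 0) with hM'def
        have hM'app : ∀ a b, M' a b = if b = i then 0 else M a b := by
          intro a b; rw [hM'def, Matrix.updateCol_apply]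
        have hstep : redStep M M' := ⟨i, Or.inl ⟨hrow', rfl⟩⟩
        have hM'nn : ∀ a b, 0 ≤ M' a b := by
          intro a b; rw [hM'app]; split
          · exact le_rfl
          · exact hM a b
        have hM'le : ∀ a b, M' a b ≤ M a b := by
          intro a b; rw [hM'app]; split
          · exact hM a b
          · exact le_rfl
        obtain ⟨k, hk1, hk⟩ := hnil
        have hM'nil : ∃ k, 1 ≤ k ∧ M' ^ k = 0 :=
          ⟨k, hk1, nilpotent_of_le M M' hM'nn hM hM'le k hk⟩
        have hdead : ∀ j, Dead M j → Dead M' j := by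
          intro j hd
          constructor
          · intro l; rw [hM'app]; split
            · rfl
            · exact hd.1 l
          · intro l; rw [hM'app]; split
            · rfl
            · exact hd.2 l
        have hdi : Dead M' i := by
          constructor
          · intro l; rw [hM'app]; split
            · rfl
            · exact hrow' l
          · intro l; rw [hM'app]; simp
        have hsub : (Finset.univ.filter fun j => ¬ Dead M' j) ⊆
            (Finset.univ.filter fun j => ¬ Dead M j).erase i := by
          intro j hj
          simp only [Finset.mem_filter, Finset.mem_univ, true_and] at hj
          rw [Finset.mem_erase]
          constructor
          · rintro rfl; exact hj hdi
          · simp only [Finset.mem_filter, Finset.mem_univ, true_and]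
            intro hd; exact hj (hdead j hd)
        have hmem : i ∈ Finset.univ.filter fun j => ¬ Dead M j := by simp [hi]
        have hcard' : (Finset.univ.filter fun j => ¬ Dead M' j).card ≤ N := by
          have h1 := Finset.card_le_card hsub
          rw [Finset.card_erase_of_mem hmem] at h1
          have h2 := Finset.card_pos.mpr ⟨i, hmem⟩
          omega
        exact Relation.ReflTransGen.head hstep (ih M' hM'nn hM'nil hcard')

lemma backward_step (M M' : Matrix (Fin n) (Fin n) ℝ) (h : redStep M M')
    (hnil : ∃ k, 1 ≤ k ∧ M' ^ k = 0) : ∃ k, 1 ≤ k ∧ M ^ k = 0 := by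
  obtain ⟨k, hk1, hk⟩ := hnil
  obtain ⟨i, hcol | hrowc⟩ := h
  · obtain ⟨hrow, hM'⟩ := hcol
    have h2 : M' * M = M * M := by
      ext a b
      rw [Matrix.mul_apply, Matrix.mul_apply]
      refine Finset.sum_congr rfl fun l _ => ?_
      rw [hM', Matrix.updateCol_apply]
      split
      · rename_i hl; subst hl; rw [hrow b]; ring
      · rfl
    have key : ∀ m, M ^ (m + 1) = M' ^ m * M := by
      intro m
      induction m with
      | zero => simp
      | succ m ih =>
          calc M ^ (m + 2) = M ^ (m + 1) * M := by rw [pow_succ]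
            _ = M' ^ m * M * M := by rw [ih]
            _ = M' ^ m * (M * M) := by rw [Matrix.mul_assoc]
            _ = M' ^ m * (M' * M) := by rw [h2]
            _ = M' ^ m * M' * M := by rw [Matrix.mul_assoc]
            _ = M' ^ (m + 1) * M := by rw [pow_succ]
    exact ⟨k + 1, by omega, by rw [key k, hk, Matrix.zero_mul]⟩
  · obtain ⟨hcol, hM'⟩ := hrowc
    have h2 : M * M' = M * M := by
      ext a b
      rw [Matrix.mul_apply, Matrix.mul_apply]
      refine Finset.sum_congr rfl fun l _ => ?_
      rw [hM', Matrix.updateRow_apply]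
      split
      · rename_i hl; subst hl; rw [hcol a]; ring
      · rfl
    have key : ∀ m, M ^ (m + 1) = M * M' ^ m := by
      intro m
      induction m with
      | zero => simp
      | succ m ih =>
          calc M ^ (m + 2) = M * M ^ (m + 1) := by rw [pow_succ']
            _ = M * (M * M' ^ m) := by rw [ih]
            _ = M * M * M' ^ m := by rw [Matrix.mul_assoc]
            _ = M * M' * M' ^ m := by rw [h2]
            _ = M * (M' * M' ^ m) := by rw [Matrix.mul_assoc]
            _ = M * M' ^ (m + 1) := by rw [pow_succ']
    exact ⟨k + 1, by omega, by rw [key k, hk, Matrix.mul_zero]⟩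

end RedAux

theorem nonneg_nilpotent_iff_reducible_to_zero {n : ℕ} (A : Matrix (Fin n) (Fin n) ℝ)
    (hA : ∀ i j, 0 ≤ A i j) :
    (∃ k : ℕ, 1 ≤ k ∧ A ^ k = 0) ↔ Relation.ReflTransGen redStep A 0 := by
  constructor
  · intro hnil
    exact RedAux.forward_aux _ A hA hnil le_rfl
  · intro hred
    clear hA
    induction hred using Relation.ReflTransGen.head_induction_on with
    | refl => exact ⟨1, le_rfl, by simp⟩
    | head hstep _ ih => exact RedAux.backward_step _ _ hstep ih
end
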